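/- For every bounded linear operator A on a complex Hilbert space and every μ with 0 ≤ μ ≤ 2, w(A)² ≤ (1/4)·‖μ|A|² + (2−μ)|A*|²‖ + (1/8)·‖|A|² + |A*|²‖ + (1/4)·w(A²). -/

import Mathlib

open scoped InnerProductSpace

variable {H : Type*} [NormedAddCommGroup H] [InnerProductSpace ℂ H] [CompleteSpace H]

/-- The numerical radius of a bounded linear operator. -/
noncomputable def numRad (A : H →L[ℂ] H) : ℝ :=
  sSup {r : ℝ | ∃ x : H, ‖x‖ = 1 ∧ r = ‖⟪A x, x⟫_ℂ‖}

/-- The absolute value `|A| = (A*A)^(1/2)` of a bounded linear operator. -/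
noncomputable def oabs (A : H →L[ℂ] H) : H →L[ℂ] H :=
  CFC.sqrt (ContinuousLinearMap.adjoint A * A)

/-- The spectral radius (as a real number). -/
noncomputable def specRad (A : H →L[ℂ] H) : ℝ := (spectralRadius ℂ A).toReal

set_option maxHeartbeats 1000000 in
set_option synthInstance.maxHeartbeats 400000 in
/-- Buzano's inequality. -/
lemma buzano' (e u v : H) (he : ‖e‖ = 1) :
    2 * ‖⟪u, e⟫_ℂ * ⟪e, v⟫_ℂ‖ ≤ ‖u‖ * ‖v‖ + ‖⟪u, v⟫_ℂ‖ := by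
  set c : ℂ := 2 * ⟪e, u⟫_ℂ with hc
  have hnorm : ‖c • e - u‖ = ‖u‖ := by
    have h := @norm_sub_sq ℂ H _ _ _ (c • e) u
    have h1 : ‖c • e‖ ^ 2 = 4 * ‖⟪e, u⟫_ℂ‖ ^ 2 := by
      rw [norm_smul, he, mul_one, hc, norm_mul, Complex.norm_ofNat]
      ring
    have h2 : RCLike.re ⟪c • e, u⟫_ℂ = 2 * ‖⟪e, u⟫_ℂ‖ ^ 2 := by
      rw [inner_smul_left, hc]
      have : (starRingEnd ℂ) (2 * ⟪e, u⟫_ℂ) * ⟪e, u⟫_ℂ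
          = 2 * ((starRingEnd ℂ) ⟪e, u⟫_ℂ * ⟪e, u⟫_ℂ) := by
        rw [map_mul, Complex.conj_ofNat]; ring
      rw [this, RCLike.conj_mul]
      simp
      norm_cast
    have : ‖c • e - u‖ ^ 2 = ‖u‖ ^ 2 := by rw [h, h1, h2]; ring
    have h3 : (0:ℝ) ≤ ‖c • e - u‖ := norm_nonneg _
    nlinarith [norm_nonneg u]
  have hCS : ‖⟪c • e - u, v⟫_ℂ‖ ≤ ‖u‖ * ‖v‖ := by
    calc ‖⟪c • e - u, v⟫_ℂ‖ ≤ ‖c • e - u‖ * ‖v‖ := norm_inner_le_norm _ _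
    _ = ‖u‖ * ‖v‖ := by rw [hnorm]
  have hid : ⟪c • e - u, v⟫_ℂ = 2 * (⟪u, e⟫_ℂ * ⟪e, v⟫_ℂ) - ⟪u, v⟫_ℂ := by
    rw [inner_sub_left, inner_smul_left, hc]
    have : (starRingEnd ℂ) (2 * ⟪e, u⟫_ℂ) = 2 * ⟪u, e⟫_ℂ := by
      rw [map_mul, Complex.conj_ofNat, inner_conj_symm]
    rw [this]; ring
  calc 2 * ‖⟪u, e⟫_ℂ * ⟪e, v⟫_ℂ‖ = ‖(2 * (⟪u, e⟫_ℂ * ⟪e, v⟫_ℂ) - ⟪u, v⟫_ℂ) + ⟪u, v⟫_ℂ‖ := by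
        rw [sub_add_cancel, norm_mul]; simp
    _ ≤ ‖2 * (⟪u, e⟫_ℂ * ⟪e, v⟫_ℂ) - ⟪u, v⟫_ℂ‖ + ‖⟪u, v⟫_ℂ‖ := norm_add_le _ _
    _ ≤ ‖u‖ * ‖v‖ + ‖⟪u, v⟫_ℂ‖ := by rw [← hid]; exact add_le_add_left hCS _

lemma numRad_bdd (A : H →L[ℂ] H) :
    BddAbove {r : ℝ | ∃ x : H, ‖x‖ = 1 ∧ r = ‖⟪A x, x⟫_ℂ‖} := by
  refine ⟨‖A‖, ?_⟩
  rintro r ⟨x, hx, rfl⟩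
  calc ‖⟪A x, x⟫_ℂ‖ ≤ ‖A x‖ * ‖x‖ := norm_inner_le_norm _ _
    _ ≤ (‖A‖ * ‖x‖) * ‖x‖ := mul_le_mul_of_nonneg_right (A.le_opNorm x) (norm_nonneg x)
    _ = ‖A‖ := by rw [hx]; ring

lemma le_numRad (A : H →L[ℂ] H) (x : H) (hx : ‖x‖ = 1) :
    ‖⟪A x, x⟫_ℂ‖ ≤ numRad A :=
  le_csSup (numRad_bdd A) ⟨x, hx, rfl⟩

lemma numRad_nonneg (A : H →L[ℂ] H) : 0 ≤ numRad A := by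
  rcases isEmpty_or_nonempty {x : H // ‖x‖ = 1} with h | h
  · have : {r : ℝ | ∃ x : H, ‖x‖ = 1 ∧ r = ‖⟪A x, x⟫_ℂ‖} = ∅ := by
      ext r; simp only [Set.mem_setOf_eq, Set.mem_empty_iff_false, iff_false]
      rintro ⟨x, hx, -⟩
      exact h.elim ⟨x, hx⟩
    rw [numRad, this, Real.sSup_empty]
  · obtain ⟨x, hx⟩ := h
    exact le_trans (norm_nonneg _) (le_numRad A x hx)

set_option maxHeartbeats 1000000 in
set_option synthInstance.maxHeartbeats 400000 in
lemma oabs_sq' (A : H →L[ℂ] H) :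
    oabs A ^ 2 = ContinuousLinearMap.adjoint A * A := by
  rw [oabs, ← ContinuousLinearMap.star_eq_adjoint]
  exact CFC.sq_sqrt _ (star_mul_self_nonneg A)

lemma oabs_adjoint_sq' (A : H →L[ℂ] H) :
    oabs (ContinuousLinearMap.adjoint A) ^ 2 = A * ContinuousLinearMap.adjoint A := by
  rw [oabs_sq', ContinuousLinearMap.adjoint_adjoint]

lemma re_inner_le_opNorm (M : H →L[ℂ] H) (x : H) (hx : ‖x‖ = 1) :
    (⟪M x, x⟫_ℂ).re ≤ ‖M‖ := by
  calc (⟪M x, x⟫_ℂ).re ≤ ‖⟪M x, x⟫_ℂ‖ := Complex.re_le_norm _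
    _ = ‖⟪M x, x⟫_ℂ‖ := rfl
    _ ≤ ‖M x‖ * ‖x‖ := norm_inner_le_norm _ _
    _ ≤ (‖M‖ * ‖x‖) * ‖x‖ := mul_le_mul_of_nonneg_right (M.le_opNorm x) (norm_nonneg x)
    _ = ‖M‖ := by rw [hx]; ring

set_option maxHeartbeats 1000000 in
set_option synthInstance.maxHeartbeats 400000 in
lemma re_weighted (α β : ℝ) (A : H →L[ℂ] H) (x : H) :
    (⟪(α • (ContinuousLinearMap.adjoint A * A)
        + β • (A * ContinuousLinearMap.adjoint A)) x, x⟫_ℂ).re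
      = α * ‖A x‖ ^ 2 + β * ‖ContinuousLinearMap.adjoint A x‖ ^ 2 := by
  have h1 : ⟪(ContinuousLinearMap.adjoint A * A) x, x⟫_ℂ = (‖A x‖ ^ 2 : ℂ) := by
    rw [ContinuousLinearMap.mul_apply, ContinuousLinearMap.adjoint_inner_left]
    exact_mod_cast inner_self_eq_norm_sq_to_K (A x)
  have h2 : ⟪(A * ContinuousLinearMap.adjoint A) x, x⟫_ℂ
      = (‖ContinuousLinearMap.adjoint A x‖ ^ 2 : ℂ) := by
    rw [ContinuousLinearMap.mul_apply, ← ContinuousLinearMap.adjoint_inner_right]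
    exact_mod_cast inner_self_eq_norm_sq_to_K (ContinuousLinearMap.adjoint A x)
  rw [ContinuousLinearMap.add_apply, inner_add_left,
    ContinuousLinearMap.smul_apply, ContinuousLinearMap.smul_apply,
    RCLike.real_smul_eq_coe_smul (K := ℂ) α, RCLike.real_smul_eq_coe_smul (K := ℂ) β,
    inner_smul_left, inner_smul_left, h1, h2]
  norm_num [← Complex.ofReal_pow]

set_option maxHeartbeats 1000000 in
set_option synthInstance.maxHeartbeats 400000 in
theorem stmt3 (A : H →L[ℂ] H) (μ : ℝ) (hμ : 0 ≤ μ ∧ μ ≤ 2) :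
    numRad A ^ 2 ≤
      (1 / 4) * ‖μ • oabs A ^ 2 + (2 - μ) • oabs (ContinuousLinearMap.adjoint A) ^ 2‖
        + (1 / 8) * ‖oabs A ^ 2 + oabs (ContinuousLinearMap.adjoint A) ^ 2‖
        + (1 / 4) * numRad (A ^ 2) := by
  obtain ⟨hμ0, hμ2⟩ := hμ
  set N1 : ℝ := ‖μ • oabs A ^ 2 + (2 - μ) • oabs (ContinuousLinearMap.adjoint A) ^ 2‖ with hN1def
  set N2 : ℝ := ‖oabs A ^ 2 + oabs (ContinuousLinearMap.adjoint A) ^ 2‖ with hN2def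
  set W : ℝ := numRad (A ^ 2) with hWdef
  set R : ℝ := (1 / 4) * N1 + (1 / 8) * N2 + (1 / 4) * W with hRdef
  have hW0 : 0 ≤ W := numRad_nonneg _
  have hR0 : 0 ≤ R := by
    have : (0:ℝ) ≤ N1 := norm_nonneg _
    have : (0:ℝ) ≤ N2 := norm_nonneg _
    positivity
  -- pointwise inequality
  have key : ∀ x : H, ‖x‖ = 1 → ‖⟪A x, x⟫_ℂ‖ ^ 2 ≤ R := by
    intro x hx
    set t : ℝ := ‖⟪A x, x⟫_ℂ‖ with htdef
    set a : ℝ := ‖A x‖ with hadef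
    set b : ℝ := ‖ContinuousLinearMap.adjoint A x‖ with hbdef
    have ht0 : 0 ≤ t := norm_nonneg _
    have ht_a : t ≤ a := by
      calc t ≤ ‖A x‖ * ‖x‖ := norm_inner_le_norm _ _
        _ = a := by rw [hx, mul_one]
    have e1 : ⟪x, ContinuousLinearMap.adjoint A x⟫_ℂ = ⟪A x, x⟫_ℂ :=
      ContinuousLinearMap.adjoint_inner_right A x x
    have ht_b : t ≤ b := by
      have : ⟪A x, x⟫_ℂ = ⟪x, ContinuousLinearMap.adjoint A x⟫_ℂ := e1.symm
      calc t = ‖⟪x, ContinuousLinearMap.adjoint A x⟫_ℂ‖ := by rw [htdef, this]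
        _ ≤ ‖x‖ * ‖ContinuousLinearMap.adjoint A x‖ := norm_inner_le_norm _ _
        _ = b := by rw [hx, one_mul]
    have e2 : ⟪A x, ContinuousLinearMap.adjoint A x⟫_ℂ = ⟪(A ^ 2) x, x⟫_ℂ := by
      rw [ContinuousLinearMap.adjoint_inner_right, pow_two, ContinuousLinearMap.mul_apply]
    have hbuz : 2 * t ^ 2 ≤ a * b + ‖⟪(A ^ 2) x, x⟫_ℂ‖ := by
      have hb := buzano' x (A x) (ContinuousLinearMap.adjoint A x) hx
      rw [e1, e2] at hb
      calc 2 * t ^ 2 = 2 * ‖⟪A x, x⟫_ℂ * ⟪A x, x⟫_ℂ‖ := by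
            simp only [norm_mul, ← htdef]; ring
        _ ≤ a * b + ‖⟪(A ^ 2) x, x⟫_ℂ‖ := hb
    have hc : ‖⟪(A ^ 2) x, x⟫_ℂ‖ ≤ W := le_numRad (A ^ 2) x hx
    have hN1 : μ * a ^ 2 + (2 - μ) * b ^ 2 ≤ N1 := by
      have hre := re_weighted μ (2 - μ) A x
      have hle := re_inner_le_opNorm
        (μ • (ContinuousLinearMap.adjoint A * A)
          + (2 - μ) • (A * ContinuousLinearMap.adjoint A)) x hx
      rw [hre] at hle
      rw [hN1def, oabs_sq', oabs_adjoint_sq']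
      exact hle
    have hN2 : a ^ 2 + b ^ 2 ≤ N2 := by
      have hre := re_weighted 1 1 A x
      have hle := re_inner_le_opNorm
        ((1:ℝ) • (ContinuousLinearMap.adjoint A * A)
          + (1:ℝ) • (A * ContinuousLinearMap.adjoint A)) x hx
      rw [hre] at hle
      rw [hN2def, oabs_sq', oabs_adjoint_sq']
      rw [one_smul, one_smul] at hle
      linarith
    have hta2 : t ^ 2 ≤ a ^ 2 := by nlinarith
    have htb2 : t ^ 2 ≤ b ^ 2 := by nlinarith
    have hmin : t ^ 2 ≤ (μ / 2) * a ^ 2 + ((2 - μ) / 2) * b ^ 2 := by nlinarith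
    have hab : a * b ≤ (a ^ 2 + b ^ 2) / 2 := by nlinarith [sq_nonneg (a - b)]
    rw [hRdef]
    linarith
  -- from pointwise to the supremum
  have hsup : numRad A ≤ Real.sqrt R := by
    rw [numRad]
    apply Real.sSup_le
    · rintro r ⟨x, hx, rfl⟩
      have h2 := key x hx
      exact (Real.le_sqrt (norm_nonneg _) hR0).mpr h2
    · exact Real.sqrt_nonneg R
  calc numRad A ^ 2 ≤ Real.sqrt R ^ 2 :=
        pow_le_pow_left₀ (numRad_nonneg A) hsup 2
    _ = R := Real.sq_sqrt hR0
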